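/- Let n ≥ 1 and Ξ = T_{V₊} ∩ S^n_ℂ. Then the boundary of Ξ in the complex sphere, i.e. the set (closure of Ξ in ℂ^{n+1}) \ Ξ, equals {u + iv : u, v ∈ V, [u,u]_V = 0, u₀ ≥ 0, [v,v]_V = −1, [u,v]_V = 0}. (Paper: Lemma 3.6, lem:3.1.) -/

import Mathlib

open MeasureTheory

noncomputable section

/-- Standard complex bilinear form on ℂ^{n+1}. -/
def dotC (n : ℕ) (z w : Fin (n+1) → ℂ) : ℂ := ∑ j, z j * w j

/-- The real form V = ℝe₀ ⊕ iℝⁿ. -/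
def memV (n : ℕ) (z : Fin (n+1) → ℂ) : Prop :=
  (z 0).im = 0 ∧ ∀ j, j ≠ 0 → (z j).re = 0

/-- The open forward light cone V₊ ⊆ V. -/
def memVplus (n : ℕ) (z : Fin (n+1) → ℂ) : Prop :=
  memV n z ∧ 0 < (z 0).re ∧ 0 < (dotC n z z).re

/-- The tube domain T_{V₊} = V₊ + iV. -/
def memTV (n : ℕ) (z : Fin (n+1) → ℂ) : Prop :=
  ∃ x y, memVplus n x ∧ memV n y ∧ z = x + Complex.I • y

/-- The crown Ξ = T_{V₊} ∩ S^n_ℂ. -/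
def memXi (n : ℕ) (z : Fin (n+1) → ℂ) : Prop :=
  memTV n z ∧ dotC n z z = 1

/-- The forward light rays L^n₊. -/
def memLn (n : ℕ) (v : Fin (n+1) → ℂ) : Prop :=
  memV n v ∧ dotC n v v = 0 ∧ 0 < (v 0).re

/-- The hyperboloid H^n_V ⊆ V. -/
def memHn (n : ℕ) (u : Fin (n+1) → ℂ) : Prop :=
  memV n u ∧ 0 < (u 0).re ∧ dotC n u u = 1

/-- The conjugation σ_V fixing V pointwise. -/
def sigmaV (n : ℕ) (z : Fin (n+1) → ℂ) : Fin (n+1) → ℂ :=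
  fun j => if j = 0 then (starRingEnd ℂ) (z j) else -((starRingEnd ℂ) (z j))

/-- The conjugation σ_E fixing ℝ^{n+1} pointwise. -/
def sigmaE (n : ℕ) (z : Fin (n+1) → ℂ) : Fin (n+1) → ℂ := fun j => (starRingEnd ℂ) (z j)

/-- Standard basis vectors of ℂ^{n+1}. -/
def stdC (n : ℕ) (k : Fin (n+1)) : Fin (n+1) → ℂ := fun j => if j = k then 1 else 0

/-- The group G^c ≅ O(1,n)(ℝ)^↑, realized as complex-linear maps preserving the
bilinear form, preserving V, and positively oriented in time. -/
def isGc (n : ℕ) (g : (Fin (n+1) → ℂ) →ₗ[ℂ] (Fin (n+1) → ℂ)) : Prop :=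
  Function.Bijective g ∧ (∀ z w, dotC n (g z) (g w) = dotC n z w) ∧
  (∀ z, memV n z → memV n (g z)) ∧ 0 < ((g (stdC n 0)) 0).re

/-- ξ_u = e₀ + iu for u ∈ ℝⁿ. -/
def xiC (n : ℕ) (u : Fin n → ℝ) : Fin (n+1) → ℂ :=
  Fin.cons 1 (fun j => Complex.I * (u j : ℂ))

/-- The unit sphere S^{n-1} ⊆ ℝⁿ. -/
def unitSph (n : ℕ) (u : Fin n → ℝ) : Prop := ∑ j, u j ^ 2 = 1

/-- The action of G^c on the sphere S^{n-1}, defined via g ξ_u = j(g,u) ξ_{g.u}. -/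
def gact (n : ℕ) (g : (Fin (n+1) → ℂ) →ₗ[ℂ] (Fin (n+1) → ℂ)) (u : Fin n → ℝ) : Fin n → ℝ :=
  fun j => ((g (xiC n u)) j.succ).im / ((g (xiC n u)) 0).re

/-- μ is the rotation-invariant Borel probability measure on S^{n-1} ⊆ ℝⁿ. -/
def IsSphereMeasure (n : ℕ) (μ : Measure (Fin n → ℝ)) : Prop :=
  IsProbabilityMeasure μ ∧ μ {u | unitSph n u}ᶜ = 0 ∧
  ∀ g : Matrix.orthogonalGroup (Fin n) ℝ,
    μ.map (fun u => (g : Matrix (Fin n) (Fin n) ℝ).mulVec u) = μ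

/-- ρ = (n-1)/2 as a complex number. -/
def rhoC (n : ℕ) : ℂ := ((n : ℂ) - 1) / 2

/-- λ_m = √(ρ²−m²) for m ≤ ρ and i√(m²−ρ²) for m ≥ ρ. -/
def lamOf (n : ℕ) (m : ℝ) : ℂ :=
  if m ≤ ((n : ℝ) - 1) / 2 then (Real.sqrt ((((n : ℝ) - 1) / 2) ^ 2 - m ^ 2) : ℂ)
  else Complex.I * (Real.sqrt (m ^ 2 - (((n : ℝ) - 1) / 2) ^ 2) : ℂ)


namespace Stmt6Aux

/-- The real Lorentzian form on (the V-coordinates of) a vector. -/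
def B (n : ℕ) (x y : Fin (n+1) → ℂ) : ℝ :=
  (x 0).re * (y 0).re - ∑ j : Fin n, (x j.succ).im * (y j.succ).im

lemma dot_add_left (n : ℕ) (x y w : Fin (n+1) → ℂ) :
    dotC n (x + y) w = dotC n x w + dotC n y w := by
  simp [dotC, add_mul, Finset.sum_add_distrib]

lemma dot_comm (n : ℕ) (x y : Fin (n+1) → ℂ) : dotC n x y = dotC n y x := by
  simp [dotC, mul_comm]

lemma dot_add_right (n : ℕ) (x y w : Fin (n+1) → ℂ) :
    dotC n w (x + y) = dotC n w x + dotC n w y := by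
  rw [dot_comm, dot_add_left, dot_comm n x w, dot_comm n y w]

lemma dot_smul_left (n : ℕ) (c : ℂ) (x w : Fin (n+1) → ℂ) :
    dotC n (c • x) w = c * dotC n x w := by
  simp [dotC, Finset.mul_sum, mul_assoc]

lemma dot_smul_right (n : ℕ) (c : ℂ) (x w : Fin (n+1) → ℂ) :
    dotC n w (c • x) = c * dotC n w x := by
  rw [dot_comm, dot_smul_left, dot_comm n x w]

lemma dot_expand (n : ℕ) (x y : Fin (n+1) → ℂ) :
    dotC n (x + Complex.I • y) (x + Complex.I • y)
      = dotC n x x - dotC n y y + 2 * Complex.I * dotC n x y := by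
  have h : ∀ j : Fin (n+1), (x j + Complex.I * y j) * (x j + Complex.I * y j)
      = x j * x j - y j * y j + 2 * Complex.I * (x j * y j) := fun j => by
    linear_combination (y j * y j) * Complex.I_sq
  simp only [dotC, Pi.add_apply, Pi.smul_apply, smul_eq_mul, h,
    Finset.sum_add_distrib, Finset.sum_sub_distrib, Finset.mul_sum]

lemma memV_coord0 {n : ℕ} {x : Fin (n+1) → ℂ} (hx : memV n x) :
    x 0 = ((x 0).re : ℂ) := by
  apply Complex.ext <;> simp [hx.1]

lemma memV_coordsucc {n : ℕ} {x : Fin (n+1) → ℂ} (hx : memV n x) (j : Fin n) :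
    x j.succ = Complex.I * ((x j.succ).im : ℂ) := by
  apply Complex.ext <;> simp [hx.2 j.succ (Fin.succ_ne_zero j)]

lemma dot_real {n : ℕ} {x y : Fin (n+1) → ℂ} (hx : memV n x) (hy : memV n y) :
    dotC n x y = ((B n x y : ℝ) : ℂ) := by
  have h : ∀ j : Fin n, x j.succ * y j.succ
      = -((((x j.succ).im * (y j.succ).im : ℝ)) : ℂ) := fun j => by
    conv_lhs => rw [memV_coordsucc hx j, memV_coordsucc hy j]
    push_cast
    linear_combination (((x j.succ).im : ℂ) * ((y j.succ).im : ℂ)) * Complex.I_sq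
  rw [dotC, Fin.sum_univ_succ, memV_coord0 hx, memV_coord0 hy, B]
  rw [Finset.sum_congr rfl (fun j _ => h j)]
  push_cast
  rw [Finset.sum_neg_distrib]
  ring

/-- The V-part of a vector. -/
def Vp (n : ℕ) (z : Fin (n+1) → ℂ) : Fin (n+1) → ℂ :=
  fun j => if j = 0 then ((z 0).re : ℂ) else Complex.I * ((z j).im : ℂ)

/-- The iV-part of a vector. -/
def Ip (n : ℕ) (z : Fin (n+1) → ℂ) : Fin (n+1) → ℂ :=
  fun j => if j = 0 then ((z 0).im : ℂ) else Complex.I * (-((z j).re) : ℂ)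

lemma memV_Vp (n : ℕ) (z : Fin (n+1) → ℂ) : memV n (Vp n z) := by
  constructor
  · simp [Vp]
  · intro j hj; simp [Vp, hj]

lemma memV_Ip (n : ℕ) (z : Fin (n+1) → ℂ) : memV n (Ip n z) := by
  constructor
  · simp [Ip]
  · intro j hj; simp [Ip, hj]

lemma decomp (n : ℕ) (z : Fin (n+1) → ℂ) :
    z = Vp n z + Complex.I • Ip n z := by
  funext j
  by_cases hj : j = 0
  · subst hj
    simp only [Vp, Ip, Pi.add_apply, Pi.smul_apply, smul_eq_mul, if_pos rfl]
    apply Complex.ext <;> simp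
  · simp only [Vp, Ip, Pi.add_apply, Pi.smul_apply, smul_eq_mul, if_neg hj]
    apply Complex.ext <;> simp

lemma Vp_eq {n : ℕ} {x y z : Fin (n+1) → ℂ} (hx : memV n x) (hy : memV n y)
    (hz : z = x + Complex.I • y) : Vp n z = x := by
  subst hz
  funext j
  by_cases hj : j = 0
  · subst hj
    simp only [Vp, if_pos rfl, Pi.add_apply, Pi.smul_apply, smul_eq_mul]
    apply Complex.ext <;> simp [hx.1, hy.1]
  · simp only [Vp, if_neg hj, Pi.add_apply, Pi.smul_apply, smul_eq_mul]
    apply Complex.ext <;> simp [hx.2 j hj, hy.2 j hj]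

lemma memXi_iff (n : ℕ) (z : Fin (n+1) → ℂ) :
    memXi n z ↔ memVplus n (Vp n z) ∧ dotC n z z = 1 := by
  constructor
  · rintro ⟨⟨x, y, hx, hy, hzxy⟩, hdot⟩
    rw [Vp_eq hx.1 hy hzxy]
    exact ⟨hx, hdot⟩
  · rintro ⟨h1, h2⟩
    exact ⟨⟨_, _, h1, memV_Ip n z, decomp n z⟩, h2⟩

lemma memV_add {n : ℕ} {x y : Fin (n+1) → ℂ} (hx : memV n x) (hy : memV n y) :
    memV n (x + y) := by
  constructor
  · simp [hx.1, hy.1]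
  · intro j hj; simp [hx.2 j hj, hy.2 j hj]

lemma memV_smul {n : ℕ} (t : ℝ) {x : Fin (n+1) → ℂ} (hx : memV n x) :
    memV n ((t : ℂ) • x) := by
  constructor
  · simp [hx.1]
  · intro j hj; simp [hx.2 j hj]

lemma cont_dot (n : ℕ) : Continuous fun z : Fin (n+1) → ℂ => dotC n z z := by
  unfold dotC
  exact continuous_finset_sum _ fun j _ => (continuous_apply j).mul (continuous_apply j)

lemma cont_B (n : ℕ) : Continuous fun z : Fin (n+1) → ℂ => B n z z := by
  unfold B
  apply Continuous.sub
  · exact (Complex.continuous_re.comp (continuous_apply 0)).mul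
      (Complex.continuous_re.comp (continuous_apply 0))
  · exact continuous_finset_sum _ fun j _ =>
      (Complex.continuous_im.comp (continuous_apply j.succ)).mul
        (Complex.continuous_im.comp (continuous_apply j.succ))

lemma B_Vp (n : ℕ) (z : Fin (n+1) → ℂ) : B n (Vp n z) (Vp n z) = B n z z := by
  have h0 : ((Vp n z) 0).re = (z 0).re := by simp [Vp]
  have hs : ∀ j : Fin n, ((Vp n z) j.succ).im = (z j.succ).im := fun j => by
    simp [Vp, Fin.succ_ne_zero j]
  simp [B, h0, hs]

end Stmt6Aux

open Stmt6Aux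

/-- Lemma 3.6 (lem:3.1): the boundary of Ξ in S^n_ℂ is
{u + iv : [u,u]_V = 0, u₀ ≥ 0, [v,v]_V = −1, [u,v]_V = 0}. -/
theorem stmt_6 (n : ℕ) (hn : 1 ≤ n) :
    closure {z : Fin (n+1) → ℂ | memXi n z} \ {z : Fin (n+1) → ℂ | memXi n z}
      = {z : Fin (n+1) → ℂ | ∃ u v : Fin (n+1) → ℂ, memV n u ∧ memV n v ∧
          z = u + Complex.I • v ∧
          dotC n u u = 0 ∧ 0 ≤ (u 0).re ∧ dotC n v v = -1 ∧ dotC n u v = 0} := by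
  classical
  ext z
  simp only [Set.mem_diff, Set.mem_setOf_eq]
  constructor
  · rintro ⟨hcl, hnot⟩
    -- facts valid on the closure
    have key : ∀ (P : Set (Fin (n+1) → ℂ)), IsClosed P →
        {w : Fin (n+1) → ℂ | memXi n w} ⊆ P → z ∈ P := fun P hP hsub =>
      (hP.closure_subset_iff.mpr hsub) hcl
    have h1 : dotC n z z = 1 :=
      key _ (isClosed_eq (cont_dot n) continuous_const) (fun w hw => hw.2)
    have h2 : 0 ≤ (z 0).re := by
      refine key _ (isClosed_le continuous_const
        (Complex.continuous_re.comp (continuous_apply 0))) (fun w hw => ?_)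
      rcases (memXi_iff n w).mp hw with ⟨hvp, -⟩
      have h0 : ((Vp n w) 0).re = (w 0).re := by simp [Vp]
      exact le_of_lt (h0 ▸ hvp.2.1)
    have h3 : 0 ≤ B n z z := by
      refine key _ (isClosed_le continuous_const (cont_B n)) (fun w hw => ?_)
      rcases (memXi_iff n w).mp hw with ⟨hvp, -⟩
      have hB : (dotC n (Vp n w) (Vp n w)).re = B n w w := by
        rw [dot_real (memV_Vp n w) (memV_Vp n w), Complex.ofReal_re, B_Vp]
      exact le_of_lt (hB ▸ hvp.2.2)
    have hnotVp : ¬ memVplus n (Vp n z) := fun h => hnot ((memXi_iff n z).mpr ⟨h, h1⟩)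
    have hS : 0 ≤ ∑ j : Fin n, (z j.succ).im * (z j.succ).im :=
      Finset.sum_nonneg fun j _ => mul_self_nonneg _
    have hBz0 : B n z z = 0 := by
      by_contra hne
      have hBpos : 0 < B n z z := lt_of_le_of_ne h3 (Ne.symm hne)
      have hz0pos : 0 < (z 0).re := by
        rcases lt_or_eq_of_le h2 with h | h
        · exact h
        · exfalso; unfold B at hBpos; nlinarith
      apply hnotVp
      refine ⟨memV_Vp n z, ?_, ?_⟩
      · simpa [Vp] using hz0pos
      · rw [dot_real (memV_Vp n z) (memV_Vp n z), Complex.ofReal_re, B_Vp]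
        exact hBpos
    have huu : dotC n (Vp n z) (Vp n z) = 0 := by
      rw [dot_real (memV_Vp n z) (memV_Vp n z), B_Vp, hBz0, Complex.ofReal_zero]
    have h1' : dotC n (Vp n z) (Vp n z) - dotC n (Ip n z) (Ip n z)
        + 2 * Complex.I * dotC n (Vp n z) (Ip n z) = 1 := by
      rw [← dot_expand n (Vp n z) (Ip n z), ← decomp n z]; exact h1
    rw [huu, dot_real (memV_Ip n z) (memV_Ip n z),
      dot_real (memV_Vp n z) (memV_Ip n z)] at h1'
    rw [Complex.ext_iff] at h1'
    simp [Complex.add_re, Complex.sub_re, Complex.ofReal_re, Complex.mul_re,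
      Complex.mul_im, Complex.add_im, Complex.sub_im] at h1'
    obtain ⟨hre, him⟩ := h1'
    refine ⟨Vp n z, Ip n z, memV_Vp n z, memV_Ip n z, decomp n z, huu, ?_, ?_, ?_⟩
    · simpa [Vp] using h2
    · rw [dot_real (memV_Ip n z) (memV_Ip n z),
        show B n (Ip n z) (Ip n z) = -1 by linarith]
      push_cast; ring
    · rw [dot_real (memV_Vp n z) (memV_Ip n z),
        show B n (Vp n z) (Ip n z) = 0 by linarith]
      push_cast; ring
  · rintro ⟨u, v, hu, hv, rfl, huu, hu0, hvv, huv⟩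
    constructor
    · -- z ∈ closure Ξ : explicit path
      set v0 : ℝ := (v 0).re with hv0def
      have hv00 : v 0 = (v0 : ℂ) := memV_coord0 hv
      set c : ℝ := Real.sqrt (1 + v0^2) with hcdef
      have hc2 : c^2 = 1 + v0^2 := Real.sq_sqrt (by positivity)
      have hcpos : 0 < c := Real.sqrt_pos.mpr (by positivity)
      have hc0 : (c : ℂ) ≠ 0 := by exact_mod_cast hcpos.ne'
      have hcc : ((c : ℂ))^2 = 1 + (v0 : ℂ)^2 := by exact_mod_cast hc2
      set w : Fin (n+1) → ℂ := ((c⁻¹ : ℝ) : ℂ) • (stdC n 0 + ((v0 : ℝ) : ℂ) • v)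
        with hwdef
      have hstd : memV n (stdC n 0) :=
        ⟨by simp [stdC], fun j hj => by simp [stdC, hj]⟩
      have hw : memV n w := memV_smul _ (memV_add hstd (memV_smul _ hv))
      have hstd_dot : ∀ y : Fin (n+1) → ℂ, dotC n (stdC n 0) y = y 0 := by
        intro y
        rw [dotC, Finset.sum_eq_single 0]
        · simp [stdC]
        · intro b _ hb; simp [stdC, hb]
        · intro h; exact absurd (Finset.mem_univ _) h
      have hee : dotC n (stdC n 0) (stdC n 0) = 1 := by
        rw [hstd_dot]; simp [stdC]
      have hev : dotC n (stdC n 0) v = (v0 : ℂ) := by rw [hstd_dot, hv00]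
      have hww : dotC n w w = 1 := by
        rw [hwdef]
        simp only [dot_smul_left, dot_smul_right, dot_add_left, dot_add_right,
          dot_comm n v (stdC n 0)]
        rw [hee, hev, hvv]
        field_simp
        have ha : ((1/c:ℝ):ℂ) * (c:ℂ) = 1 := by push_cast; field_simp
        linear_combination (-((1/c:ℝ):ℂ)^2) * hcc + (((1/c:ℝ):ℂ) * (c:ℂ) + 1) * ha
      have hwv : dotC n w v = 0 := by
        rw [hwdef, dot_smul_left, dot_add_left, dot_smul_left, hvv, hstd_dot, hv00]
        ring
      have hw0c : w 0 = (c : ℂ) := by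
        rw [hwdef]
        simp only [Pi.smul_apply, Pi.add_apply, smul_eq_mul, hv00]
        rw [show (stdC n 0) 0 = 1 by simp [stdC]]
        push_cast
        field_simp
        linear_combination (-1 : ℂ) * hcc
      have hw0r : (w 0).re = c := by rw [hw0c]; simp
      -- m = [u,w] ≥ 0 by reverse Cauchy-Schwarz
      set m : ℝ := B n u w with hmdef
      have hmuw : dotC n u w = (m : ℂ) := dot_real hu hw
      have hBuu : B n u u = 0 := by
        have h := dot_real hu hu
        rw [huu] at h
        exact_mod_cast h.symm
      have hBww : B n w w = 1 := by
        have h := dot_real hw hw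
        rw [hww] at h
        exact_mod_cast h.symm
      have hm0 : 0 ≤ m := by
        have hcs := Finset.sum_mul_sq_le_sq_mul_sq Finset.univ
          (fun j : Fin n => (u j.succ).im) (fun j : Fin n => (w j.succ).im)
        simp only [pow_two] at hcs
        unfold B at hmdef hBuu hBww
        rw [hw0r] at hmdef hBww
        have hSa : 0 ≤ ∑ j : Fin n, (u j.succ).im * (u j.succ).im :=
          Finset.sum_nonneg fun j _ => mul_self_nonneg _
        have hSb : 0 ≤ ∑ j : Fin n, (w j.succ).im * (w j.succ).im :=
          Finset.sum_nonneg fun j _ => mul_self_nonneg _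
        nlinarith [hcs, hu0, hcpos, mul_nonneg hu0 hcpos.le, hSa, hSb]
      -- the path
      set δ : ℝ := (2 * (1 + m))⁻¹ with hδdef
      have hδpos : 0 < δ := by rw [hδdef]; positivity
      set F : ℝ → (Fin (n+1) → ℂ) := fun t =>
        (u + (t : ℂ) • w) +
          Complex.I • (((Real.sqrt (1 - t^2 - 2*t*m) : ℝ) : ℂ) • v) with hFdef
      have hFcont : Continuous F := by
        apply Continuous.add
        · exact continuous_const.add
            ((Complex.continuous_ofReal).smul continuous_const)
        · apply continuous_const.fun_smul
          apply Continuous.fun_smul _ continuous_const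
          exact Complex.continuous_ofReal.comp
            (Real.continuous_sqrt.comp (by fun_prop))
      have hF0 : F 0 = u + Complex.I • v := by
        rw [hFdef]
        norm_num
      have htend : Filter.Tendsto F (nhdsWithin 0 (Set.Ioi 0))
          (nhds (u + Complex.I • v)) :=
        hF0 ▸ (hFcont.tendsto 0).mono_left nhdsWithin_le_nhds
      have hmem : ∀ t ∈ Set.Ioo (0:ℝ) δ, F t ∈ {z | memXi n z} := by
        rintro t ⟨ht0, htδ⟩
        have hfac : 0 < 2 * (1 + m) := by positivity
        have hδ1 : δ * (2 * (1 + m)) = 1 := inv_mul_cancel₀ hfac.ne'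
        have ht1 : t * (2 * (1 + m)) < 1 := by
          calc t * (2 * (1 + m)) < δ * (2 * (1 + m)) :=
                mul_lt_mul_of_pos_right htδ hfac
          _ = 1 := hδ1
        have harg : 0 < 1 - t^2 - 2*t*m := by nlinarith
        set lt : ℝ := Real.sqrt (1 - t^2 - 2*t*m) with hltdef
        have hlt2 : lt^2 = 1 - t^2 - 2*t*m := Real.sq_sqrt harg.le
        have hx : memV n (u + (t : ℂ) • w) := memV_add hu (memV_smul _ hw)
        have hxx : dotC n (u + (t : ℂ) • w) (u + (t : ℂ) • w)
            = ((t^2 + 2*t*m : ℝ) : ℂ) := by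
          simp only [dot_add_left, dot_add_right, dot_smul_left,
            dot_smul_right, dot_comm n w u]
          rw [huu, hww, hmuw]
          push_cast; ring
        have hxy : dotC n (u + (t : ℂ) • w) ((lt : ℂ) • v) = 0 := by
          simp only [dot_smul_right, dot_add_left, dot_smul_left]
          rw [huv, hwv]
          ring
        refine ⟨⟨u + (t : ℂ) • w, (lt : ℂ) • v, ⟨hx, ?_, ?_⟩,
          memV_smul _ hv, rfl⟩, ?_⟩
        · -- 0 < (x 0).re
          have hre : ((u + (t : ℂ) • w) 0).re = (u 0).re + t * c := by
            simp only [Pi.add_apply, Pi.smul_apply, smul_eq_mul, hw0c,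
              Complex.add_re, Complex.mul_re, Complex.ofReal_re,
              Complex.ofReal_im]
            ring
          rw [hre]
          nlinarith [mul_pos ht0 hcpos]
        · rw [hxx, Complex.ofReal_re]
          nlinarith
        · have hyy : dotC n ((lt : ℂ) • v) ((lt : ℂ) • v)
              = ((t^2 + 2*t*m - 1 : ℝ) : ℂ) := by
            rw [dot_smul_left, dot_smul_right, hvv]
            rw [show ((lt : ℂ)) * (((lt : ℂ)) * (-1)) = -(((lt^2 : ℝ)) : ℂ) by
              push_cast; ring]
            rw [hlt2]
            push_cast; ring
          rw [hFdef]
          simp only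
          rw [dot_expand, hxx, hxy, hyy]
          push_cast; ring
      refine mem_closure_of_tendsto htend ?_
      filter_upwards [Ioo_mem_nhdsGT_of_mem (Set.left_mem_Ico.mpr hδpos)] with t ht
      exact hmem t ht
    · -- z ∉ Ξ
      intro hXi
      have h := (memXi_iff n _).mp hXi
      rw [Vp_eq hu hv rfl] at h
      have h2 := h.1.2.2
      rw [huu] at h2
      simp at h2


end
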